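/- Fix parameters α₀, α₁ ∈ ℝ, α₂ ∈ ℝ^d, σα > 0, β₁, β₂, β₃ ∈ ℝ, β₄ ∈ ℝ^d, a covariate value w ∈ ℝ^d, and exposure levels a, a′ ∈ ℝ. For Λ > 0 define μ_{a′} = α₀ + α₁a′ + α₂ᵀw, r_{a,a′}(Λ) = [∫ exp(−Λ e^{(β₂ + β₃a)²σα² + β₁a + β₂m + β₃am + β₄ᵀw}) dN(μ_{a′}, σα²)(m)] / [∫ exp(−Λ e^{β₁a + β₂m + β₃am + β₄ᵀw}) dN(μ_{a′}, σα²)(m)], and δ(Λ; a, a′) = log r_{a,a′}(Λ) + (β₁a + β₄ᵀw) + (β₂ + β₃a)(α₀ + α₁a′ + α₂ᵀw) + (1/2)(β₂ + β₃a)²σα². Then the natural indirect effect expression converges to its rare-outcome approximation: lim_{Λ→0⁺} [δ(Λ; a, a) − δ(Λ; a, a*)] = (β₂α₁ + β₃α₁a)(a − a*). -/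

import Mathlib

open MeasureTheory ProbabilityTheory Real Filter

lemma aux_tendsto_int (μ : Measure ℝ) [IsProbabilityMeasure μ] (g : ℝ → ℝ)
    (hg : Continuous g) :
    Tendsto (fun Λ : ℝ => ∫ m, exp (-(Λ * exp (g m))) ∂μ)
      (nhdsWithin 0 (Set.Ioi 0)) (nhds 1) := by
  have h := tendsto_integral_filter_of_dominated_convergence (μ := μ)
    (l := nhdsWithin (0 : ℝ) (Set.Ioi 0))
    (F := fun Λ m => exp (-(Λ * exp (g m)))) (f := fun _ => (1 : ℝ)) (bound := fun _ => (1 : ℝ))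
    (Filter.Eventually.of_forall fun Λ =>
      (Continuous.aestronglyMeasurable (by continuity)))
    (by
      filter_upwards [self_mem_nhdsWithin] with Λ hΛ
      filter_upwards with m
      rw [Real.norm_eq_abs, abs_of_pos (exp_pos _)]
      apply Real.exp_le_one_iff.mpr
      simp only [neg_nonpos]
      exact mul_nonneg (le_of_lt (Set.mem_Ioi.mp hΛ)) (exp_pos _).le)
    (integrable_const 1)
    (by
      filter_upwards with m
      have : Tendsto (fun Λ : ℝ => exp (-(Λ * exp (g m)))) (nhds 0) (nhds 1) := by
        have : Continuous (fun Λ : ℝ => exp (-(Λ * exp (g m)))) := by continuity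
        simpa using this.tendsto 0
      exact this.mono_left nhdsWithin_le_nhds)
  simpa using h

theorem stmt_16 (d : ℕ) (α₀ α₁ : ℝ) (α₂ : Fin d → ℝ) (σα : ℝ) (hσα : 0 < σα)
    (β₁ β₂ β₃ : ℝ) (β₄ : Fin d → ℝ) (w : Fin d → ℝ) (a astar : ℝ)
    (μm : ℝ → ℝ) (hμm : μm = fun a' => α₀ + α₁ * a' + ∑ i, α₂ i * w i)
    (r : ℝ → ℝ → ℝ → ℝ)
    (hr : r = fun a a' Λ =>
      (∫ m, exp (-(Λ * exp ((β₂ + β₃ * a) ^ 2 * σα ^ 2 + β₁ * a + β₂ * m + β₃ * a * m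
            + ∑ i, β₄ i * w i))) ∂(gaussianReal (μm a') ⟨σα ^ 2, sq_nonneg σα⟩))
        / (∫ m, exp (-(Λ * exp (β₁ * a + β₂ * m + β₃ * a * m + ∑ i, β₄ i * w i)))
            ∂(gaussianReal (μm a') ⟨σα ^ 2, sq_nonneg σα⟩)))
    (δ : ℝ → ℝ → ℝ → ℝ)
    (hδ : δ = fun Λ a a' => Real.log (r a a' Λ) + (β₁ * a + ∑ i, β₄ i * w i)
      + (β₂ + β₃ * a) * (α₀ + α₁ * a' + ∑ i, α₂ i * w i)
      + (1 / 2) * (β₂ + β₃ * a) ^ 2 * σα ^ 2) :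
    Tendsto (fun Λ => δ Λ a a - δ Λ a astar) (nhdsWithin 0 (Set.Ioi 0))
      (nhds ((β₂ * α₁ + β₃ * α₁ * a) * (a - astar))) := by
  have hlogr : ∀ a' : ℝ, Tendsto (fun Λ => Real.log (r a a' Λ))
      (nhdsWithin 0 (Set.Ioi 0)) (nhds 0) := by
    intro a'
    have h1 := @aux_tendsto_int (gaussianReal (μm a') (⟨σα ^ 2, sq_nonneg σα⟩ : NNReal)) (instIsProbabilityMeasureGaussianReal _ _)
      (fun m => (β₂ + β₃ * a) ^ 2 * σα ^ 2 + β₁ * a + β₂ * m + β₃ * a * m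
            + ∑ i, β₄ i * w i) (by continuity)
    have h2 := @aux_tendsto_int (gaussianReal (μm a') (⟨σα ^ 2, sq_nonneg σα⟩ : NNReal)) (instIsProbabilityMeasureGaussianReal _ _)
      (fun m => β₁ * a + β₂ * m + β₃ * a * m + ∑ i, β₄ i * w i) (by continuity)
    have hdiv : Tendsto (fun Λ => r a a' Λ) (nhdsWithin 0 (Set.Ioi 0)) (nhds 1) := by
      rw [hr]
      simpa [Pi.div_def] using h1.div h2 one_ne_zero
    have hlog : Tendsto Real.log (nhds 1) (nhds 0) := by
      simpa using (Real.continuousAt_log one_ne_zero).tendsto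
    exact hlog.comp hdiv
  have key : Tendsto (fun Λ => (Real.log (r a a Λ) - Real.log (r a astar Λ))
      + (β₂ * α₁ + β₃ * α₁ * a) * (a - astar)) (nhdsWithin 0 (Set.Ioi 0))
      (nhds ((β₂ * α₁ + β₃ * α₁ * a) * (a - astar))) := by
    have := ((hlogr a).sub (hlogr astar)).add
      (tendsto_const_nhds (x := (β₂ * α₁ + β₃ * α₁ * a) * (a - astar))
        (f := nhdsWithin (0:ℝ) (Set.Ioi 0)))
    simpa using this
  have heq : (fun Λ => δ Λ a a - δ Λ a astar)
      = fun Λ => (Real.log (r a a Λ) - Real.log (r a astar Λ))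
      + (β₂ * α₁ + β₃ * α₁ * a) * (a - astar) := by
    funext Λ
    rw [hδ]
    ring
  rw [heq]
  exact key
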